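/- Laplace-type row expansion for quasi-determinants: for an N×N matrix A over a ring, s ≠ i, and all quasi-determinants appearing defined and invertible, |A|_{ij} = a_{ij} − Σ_{k≠j} a_{ik} (|A^{ij}|_{sk})⁻¹ |A^{ik}|_{sj}. -/

import Mathlib

open Matrix

/-- The Gelfand–Retakh quasi-determinant `|A|_{ij}`:
`|A|_{ij} = a_{ij} − Σ_{k≠j, l≠i} a_{ik} ((A^{ij})⁻¹)_{kl} a_{lj}`,
where `A^{ij}` deletes row `i` and column `j`. -/
noncomputable def quasiDet {R : Type*} [Ring R] {N : ℕ}
    (A : Matrix (Fin (N + 1)) (Fin (N + 1)) R) (i j : Fin (N + 1)) : R :=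
  A i j - ∑ k : Fin N, ∑ l : Fin N,
    A i (j.succAbove k) *
      Ring.inverse (A.submatrix i.succAbove j.succAbove) k l *
      A (i.succAbove l) j

set_option linter.deprecated false
set_option linter.unusedVariables false

lemma col_eq {n : ℕ} (j : Fin (n + 2)) (k d : Fin (n + 1))
    (h : (j.succAbove k).succAbove d = j) :
    (j.succAbove k).succAbove ∘ d.succAbove = j.succAbove ∘ k.succAbove := by
  refine (StrictMono.range_inj
    (((Fin.strictMono_succAbove (j.succAbove k))).comp (Fin.strictMono_succAbove d))
    ((Fin.strictMono_succAbove j).comp (Fin.strictMono_succAbove k))).mp ?_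
  rw [Set.range_comp, Set.range_comp, Fin.range_succAbove, Fin.range_succAbove]
  have him : ∀ (a : Fin (n + 2)) (b : Fin (n + 1)),
      a.succAbove '' {b}ᶜ = {a, a.succAbove b}ᶜ := by
    intro a b
    rw [Set.compl_eq_univ_diff, Set.image_diff (Fin.succAbove_right_injective), Set.image_univ,
      Fin.range_succAbove, Set.image_singleton]
    ext x
    simp only [Set.mem_diff, Set.mem_compl_iff, Set.mem_insert_iff, Set.mem_singleton_iff,
      Set.mem_setOf_eq, not_or]
  rw [him, him, h]
  ext x
  simp only [Set.mem_compl_iff, Set.mem_insert_iff, Set.mem_singleton_iff, not_or]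
  tauto

lemma cramer_aux {R : Type*} [Ring R] {n : ℕ} (B : Matrix (Fin (n + 1)) (Fin (n + 1)) R)
    (u : Fin (n + 1) → R) (s k : Fin (n + 1))
    (h : IsUnit (B.submatrix s.succAbove k.succAbove)) :
    quasiDet B s k * u k =
      (B *ᵥ u) s - ∑ p : Fin n, ∑ q : Fin n, B s (k.succAbove p) *
        Ring.inverse (B.submatrix s.succAbove k.succAbove) p q *
        (B *ᵥ u) (s.succAbove q) := by
  set M := B.submatrix s.succAbove k.succAbove with hM
  set X := Ring.inverse M with hX
  have hXM : X * M = 1 := Ring.inverse_mul_cancel M h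
  have hdelta : ∀ p p' : Fin n, ∑ q : Fin n, X p q * M q p' = if p = p' then 1 else 0 := by
    intro p p'
    have := congrArg (fun Y => Y p p') hXM
    simpa [Matrix.mul_apply, Matrix.one_apply] using this
  have hmv : ∀ m, (B *ᵥ u) m
      = B m k * u k + ∑ p : Fin n, B m (k.succAbove p) * u (k.succAbove p) := by
    intro m
    rw [Matrix.mulVec, dotProduct]
    exact Fin.sum_univ_succAbove (fun x => B m x * u x) k
  have key : ∀ p : Fin n, ∑ q : Fin n, X p q * (B *ᵥ u) (s.succAbove q)
      = (∑ q : Fin n, X p q * B (s.succAbove q) k) * u k + u (k.succAbove p) := by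
    intro p
    have step1 : ∀ q : Fin n, X p q * (B *ᵥ u) (s.succAbove q)
        = X p q * B (s.succAbove q) k * u k
          + ∑ p' : Fin n, (X p q * M q p') * u (k.succAbove p') := by
      intro q
      rw [hmv, mul_add, Finset.mul_sum, mul_assoc]
      congr 1
      refine Finset.sum_congr rfl fun p' _ => ?_
      rw [mul_assoc]
      rfl
    calc ∑ q : Fin n, X p q * (B *ᵥ u) (s.succAbove q)
        = ∑ q : Fin n, (X p q * B (s.succAbove q) k * u k
            + ∑ p' : Fin n, (X p q * M q p') * u (k.succAbove p')) :=
          Finset.sum_congr rfl fun q _ => step1 q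
      _ = (∑ q : Fin n, X p q * B (s.succAbove q) k) * u k
            + ∑ p' : Fin n, (∑ q : Fin n, X p q * M q p') * u (k.succAbove p') := by
          rw [Finset.sum_add_distrib, Finset.sum_mul, Finset.sum_comm]
          congr 1
          exact Finset.sum_congr rfl fun p' _ => (Finset.sum_mul _ _ _).symm
      _ = (∑ q : Fin n, X p q * B (s.succAbove q) k) * u k + u (k.succAbove p) := by
          congr 1
          simp [hdelta, ite_mul]
  calc quasiDet B s k * u k
      = B s k * u k
        - (∑ p : Fin n, ∑ q : Fin n,
            B s (k.succAbove p) * X p q * B (s.succAbove q) k) * u k := by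
        rw [quasiDet, sub_mul]
    _ = (B *ᵥ u) s - ∑ p : Fin n, ∑ q : Fin n, B s (k.succAbove p) * X p q *
          (B *ᵥ u) (s.succAbove q) := by
        rw [hmv s]
        have expand : ∀ p : Fin n, ∑ q : Fin n,
            B s (k.succAbove p) * X p q * (B *ᵥ u) (s.succAbove q)
            = (∑ q : Fin n, B s (k.succAbove p) * X p q * B (s.succAbove q) k) * u k
              + B s (k.succAbove p) * u (k.succAbove p) := by
          intro p
          have : ∑ q : Fin n, B s (k.succAbove p) * X p q * (B *ᵥ u) (s.succAbove q)
              = B s (k.succAbove p) * ∑ q : Fin n, X p q * (B *ᵥ u) (s.succAbove q) := by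
            rw [Finset.mul_sum]
            exact Finset.sum_congr rfl fun q _ => (mul_assoc _ _ _)
          rw [this, key, mul_add, ← mul_assoc, Finset.mul_sum]
          congr 2
          exact Finset.sum_congr rfl fun q _ => (mul_assoc _ _ _).symm
        rw [Finset.sum_congr rfl fun p _ => expand p, Finset.sum_add_distrib,
          Finset.sum_mul]
        abel

/-- Laplace-type row expansion for quasi-determinants.  For an
`N×N` matrix `A`, a row `s ≠ i` (encoded as `i.succAbove s`), and all
quasi-determinants appearing defined and invertible,
`|A|_{ij} = a_{ij} − Σ_{k≠j} a_{ik} (|A^{ij}|_{sk})⁻¹ |A^{ik}|_{sj}`.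
Columns `k ≠ j` are enumerated as `j.succAbove k`; `jd k` is the index of the
column `j` inside `A^{ik}` (i.e. `(j.succAbove k).succAbove (jd k) = j`). -/
theorem stmt12 {R : Type*} [Ring R] {N : ℕ}
    (A : Matrix (Fin (N + 2)) (Fin (N + 2)) R)
    (i j : Fin (N + 2)) (s : Fin (N + 1))
    (jd : Fin (N + 1) → Fin (N + 1))
    (hjd : ∀ k, (j.succAbove k).succAbove (jd k) = j)
    (h1 : IsUnit (A.submatrix i.succAbove j.succAbove))
    (h2 : ∀ k, IsUnit (A.submatrix i.succAbove (j.succAbove k).succAbove))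
    (h3 : ∀ k : Fin (N + 1), IsUnit ((A.submatrix i.succAbove j.succAbove).submatrix
      s.succAbove k.succAbove))
    (h4 : ∀ k : Fin (N + 1),
      IsUnit (quasiDet (A.submatrix i.succAbove j.succAbove) s k)) :
    quasiDet A i j =
      A i j - ∑ k : Fin (N + 1),
        A i (j.succAbove k) *
          Ring.inverse (quasiDet (A.submatrix i.succAbove j.succAbove) s k) *
          quasiDet (A.submatrix i.succAbove (j.succAbove k).succAbove) s (jd k) := by
  set B := A.submatrix i.succAbove j.succAbove with hB
  set c : Fin (N + 1) → R := fun l => A (i.succAbove l) j with hcdef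
  set u : Fin (N + 1) → R := Ring.inverse B *ᵥ c with hu
  have hBu : B *ᵥ u = c := by
    rw [hu, Matrix.mulVec_mulVec, Ring.mul_inverse_cancel _ h1, Matrix.one_mulVec]
  have hL : quasiDet A i j = A i j - ∑ k : Fin (N + 1), A i (j.succAbove k) * u k := by
    rw [quasiDet]
    congr 1
    refine Finset.sum_congr rfl fun k _ => ?_
    rw [hu, Matrix.mulVec, dotProduct, Finset.mul_sum]
    exact Finset.sum_congr rfl fun l _ => mul_assoc _ _ _
  have hC : ∀ k, quasiDet (A.submatrix i.succAbove (j.succAbove k).succAbove) s (jd k)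
      = quasiDet B s k * u k := by
    intro k
    have hcol := col_eq j k (jd k) (hjd k)
    have hsub : (A.submatrix i.succAbove (j.succAbove k).succAbove).submatrix
        s.succAbove (jd k).succAbove = B.submatrix s.succAbove k.succAbove := by
      rw [hB]
      simp only [Matrix.submatrix_submatrix]
      rw [hcol]
    rw [cramer_aux B u s k (h3 k), hBu, quasiDet]
    congr 1
    · show A (i.succAbove s) ((j.succAbove k).succAbove (jd k)) = c s
      rw [hjd k]
    · refine Finset.sum_congr rfl fun p _ => Finset.sum_congr rfl fun q _ => ?_
      rw [hsub]
      congr 1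
      · congr 1
        show A (i.succAbove s) ((j.succAbove k).succAbove ((jd k).succAbove p))
          = B s (k.succAbove p)
        have hp := congrFun hcol p
        simp only [Function.comp_apply] at hp
        rw [hp]
        rfl
      · show A (i.succAbove (s.succAbove q)) ((j.succAbove k).succAbove (jd k))
          = c (s.succAbove q)
        rw [hjd k]
  rw [hL]
  congr 1
  refine Finset.sum_congr rfl fun k _ => ?_
  rw [hC k, ← mul_assoc, mul_assoc (A i (j.succAbove k)),
    Ring.inverse_mul_cancel _ (h4 k), mul_one]
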